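/- Cauchy integral formula for derivatives: if f : ℂ → ℂ is complex-differentiable on an open set containing the closed disc of radius R centered at c (with R > 0), then for every n ∈ ℕ and every z₀ with ‖z₀ − c‖ < R, the n-th complex derivative satisfies f⁽ⁿ⁾(z₀) = (n!/(2πi)) ∮_{|z−c|=R} f(z)/(z − z₀)^{n+1} dz, the contour integral being taken counterclockwise. -/

import Mathlib

open Metric Complex

lemma iteratedDeriv_eq_factorial_mul_coeff {f : ℂ → ℂ} {p : FormalMultilinearSeries ℂ ℂ ℂ}
    {z₀ : ℂ} (hp : HasFPowerSeriesAt f p z₀) (n : ℕ) :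
    iteratedDeriv n f z₀ = (n.factorial : ℂ) * p.coeff n := by
  obtain ⟨r, hr⟩ := hp
  have h := hr.factorial_smul (1 : ℂ) n
  rw [iteratedDeriv_eq_iteratedFDeriv, ← h, FormalMultilinearSeries.coeff, nsmul_eq_mul]
  norm_num

lemma cauchy_aux (c : ℂ) (R : ℝ) (hR : 0 < R) (n : ℕ) :
    ∀ (f : ℂ → ℂ), DifferentiableOn ℂ f (closedBall c R) →
    ∀ z₀ : ℂ, ‖z₀ - c‖ < R →
    iteratedDeriv n f z₀ =
      ((n.factorial : ℂ) / (2 * Real.pi * Complex.I)) *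
        ∮ z in C(c, R), f z / (z - z₀) ^ (n + 1) := by
  induction n with
  | zero =>
    intro f hf z₀ hz₀
    have hz₀' : z₀ ∈ ball c R := by simpa [mem_ball, dist_eq_norm] using hz₀
    have := hf.circleIntegral_sub_inv_smul hz₀'
    simp only [smul_eq_mul] at this
    have h1 : (∮ z in C(c, R), f z / (z - z₀) ^ (0 + 1)) = 2 * Real.pi * Complex.I * f z₀ := by
      rw [← this]
      refine circleIntegral.integral_congr hR.le fun z hz => ?_
      simp [div_eq_inv_mul]
    rw [h1, iteratedDeriv_zero]
    have h2 : (2 * (Real.pi : ℂ) * Complex.I) ≠ 0 := by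
      simp [Real.pi_ne_zero, Complex.I_ne_zero]
    field_simp
    simp
  | succ n ih =>
    intro f hf z₀ hz₀
    have hz₀' : z₀ ∈ ball c R := by simpa [mem_ball, dist_eq_norm] using hz₀
    have hmem : closedBall c R ∈ nhds z₀ :=
      Filter.mem_of_superset (isOpen_ball.mem_nhds hz₀') ball_subset_closedBall
    -- analyticity at z₀
    have hA : AnalyticAt ℂ f z₀ := hf.analyticAt hmem
    obtain ⟨p, hp⟩ := hA
    have hps : HasFPowerSeriesAt (dslope f z₀) p.fslope z₀ := hp.has_fpower_series_dslope_fslope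
    -- dslope is differentiable on the closed ball
    have hd : DifferentiableOn ℂ (dslope f z₀) (closedBall c R) :=
      (differentiableOn_dslope hmem).mpr hf
    have key := ih (dslope f z₀) hd z₀ hz₀
    rw [iteratedDeriv_eq_factorial_mul_coeff hps n] at key
    rw [iteratedDeriv_eq_factorial_mul_coeff hp (n + 1)]
    -- identify the two circle integrals
    have hz₀s : ∀ z ∈ sphere c R, z ≠ z₀ := fun z hz h => by
      rw [mem_sphere, dist_eq_norm] at hz
      subst h
      exact absurd hz hz₀.ne
    have hcont : ContinuousOn (fun z : ℂ => ((z - z₀) ^ (n + 2))⁻¹) (sphere c R) := by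
      refine (ContinuousOn.pow (continuousOn_id.sub continuousOn_const) _).inv₀ fun z hz h => ?_
      exact hz₀s z hz (sub_eq_zero.mp (pow_eq_zero_iff (Nat.succ_ne_zero _)|>.mp h))
    have hfc : ContinuousOn f (sphere c R) :=
      hf.continuousOn.mono sphere_subset_closedBall
    have hi1 : CircleIntegrable (fun z => f z / (z - z₀) ^ (n + 2)) c R := by
      refine ContinuousOn.circleIntegrable hR.le ?_
      simpa [div_eq_mul_inv, Pi.mul_def] using hfc.mul hcont
    have hi2 : CircleIntegrable (fun z => f z₀ / (z - z₀) ^ (n + 2)) c R := by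
      refine ContinuousOn.circleIntegrable hR.le ?_
      simpa [div_eq_mul_inv, Pi.mul_def] using (continuousOn_const (c := f z₀)).mul hcont
    have hzero : (∮ z in C(c, R), f z₀ / (z - z₀) ^ (n + 2)) = 0 := by
      have h := circleIntegral.integral_sub_zpow_of_ne
        (n := -(n + 2 : ℤ)) (by omega) c z₀ R
      have h2 : (∮ z in C(c, R), ((z - z₀) ^ (n + 2))⁻¹) = 0 := by
        rw [← h]
        refine circleIntegral.integral_congr hR.le fun z hz => ?_
        rw [← zpow_natCast (z - z₀) (n + 2), ← zpow_neg]
        norm_num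
      have : (∮ z in C(c, R), f z₀ / (z - z₀) ^ (n + 2))
          = f z₀ • ∮ z in C(c, R), ((z - z₀) ^ (n + 2))⁻¹ := by
        rw [← circleIntegral.integral_smul (f z₀)]
        refine circleIntegral.integral_congr hR.le fun z hz => ?_
        simp [div_eq_mul_inv, smul_eq_mul]
      rw [this, h2, smul_zero]
    have hint : (∮ z in C(c, R), dslope f z₀ z / (z - z₀) ^ (n + 1))
        = ∮ z in C(c, R), f z / (z - z₀) ^ (n + 2) := by
      have : (∮ z in C(c, R), dslope f z₀ z / (z - z₀) ^ (n + 1))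
          = ∮ z in C(c, R), (f z / (z - z₀) ^ (n + 2) - f z₀ / (z - z₀) ^ (n + 2)) := by
        refine circleIntegral.integral_congr hR.le fun z hz => ?_
        have hne : z ≠ z₀ := hz₀s z hz
        rw [dslope_of_ne _ hne, slope_def_field, div_div, ← pow_succ', ← sub_div]
      rw [this, circleIntegral.integral_sub hi1 hi2, hzero, sub_zero]
    rw [hint] at key
    -- conclude
    have hcoeff : p.coeff (n + 1) = p.fslope.coeff n := FormalMultilinearSeries.coeff_fslope.symm
    have hfac : ((n + 1).factorial : ℂ) = ((n : ℂ) + 1) * (n.factorial : ℂ) := by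
      push_cast [Nat.factorial_succ]; ring
    have hn2 : (∮ z in C(c, R), f z / (z - z₀) ^ (n + 1 + 1))
        = ∮ z in C(c, R), f z / (z - z₀) ^ (n + 2) := rfl
    rw [hcoeff, hfac, hn2]
    calc ((n : ℂ) + 1) * (n.factorial : ℂ) * p.fslope.coeff n
        = ((n : ℂ) + 1) * ((n.factorial : ℂ) * p.fslope.coeff n) := by ring
      _ = ((n : ℂ) + 1) * (((n.factorial : ℂ) / (2 * Real.pi * Complex.I)) *
            ∮ z in C(c, R), f z / (z - z₀) ^ (n + 2)) := by rw [key]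
      _ = ((n : ℂ) + 1) * (n.factorial : ℂ) / (2 * Real.pi * Complex.I) *
            ∮ z in C(c, R), f z / (z - z₀) ^ (n + 2) := by ring

/-- Cauchy integral formula for derivatives. -/
theorem cauchy_integral_formula_deriv (f : ℂ → ℂ) (c : ℂ) (R : ℝ) (hR : 0 < R)
    (hf : ∀ z ∈ closedBall c R, DifferentiableAt ℂ f z)
    (n : ℕ) (z₀ : ℂ) (hz₀ : ‖z₀ - c‖ < R) :
    iteratedDeriv n f z₀ =
      ((n.factorial : ℂ) / (2 * Real.pi * Complex.I)) *
        ∮ z in C(c, R), f z / (z - z₀) ^ (n + 1) := by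
  exact cauchy_aux c R hR n f (fun z hz => (hf z hz).differentiableWithinAt) z₀ hz₀
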